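/- Let k > 0 and let a, b be nonzero real numbers. Then the infimum of 1/((2k − R·a² − S·b²)·√(R·S)) over all R ≥ S > 0 with R·a² + S·b² < 2k equals 2·k^{−2}·|ab| if |b| ≥ |a|, and equals k^{−2}·(a² + b²) if |b| < |a|. Moreover, when |b| ≥ |a| the infimum is attained at R = k/(2a²) and S = k/(2b²). -/

import Mathlib

lemma aux_lb (k m X s : ℝ) (hk : 0 < k) (hm : 0 < m) (hs : 0 < s)
    (hu : m * s ≤ X) (h2 : X < 2 * k) :
    m * k⁻¹ ^ 2 ≤ 1 / ((2 * k - X) * s) := by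
  rw [inv_pow, ← div_eq_mul_inv, div_le_div_iff₀ (by positivity)
    (mul_pos (by linarith) hs)]
  nlinarith [sq_nonneg (k - m * s),
    mul_le_mul_of_nonneg_left (mul_le_mul_of_nonneg_right hu hs.le) hm.le]

lemma attain1 (k a b : ℝ) (hk : 0 < k) (ha : a ≠ 0) (hb : b ≠ 0) (hab : |a| ≤ |b|) :
    k / (2 * b ^ 2) ≤ k / (2 * a ^ 2) ∧ 0 < k / (2 * b ^ 2) ∧
    (k / (2 * a ^ 2)) * a ^ 2 + (k / (2 * b ^ 2)) * b ^ 2 < 2 * k ∧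
    1 / ((2 * k - (k / (2 * a ^ 2)) * a ^ 2 - (k / (2 * b ^ 2)) * b ^ 2) *
        Real.sqrt ((k / (2 * a ^ 2)) * (k / (2 * b ^ 2)))) = 2 * k⁻¹ ^ 2 * |a * b| := by
  have ha2 : (0:ℝ) < a ^ 2 := by positivity
  have hb2 : (0:ℝ) < b ^ 2 := by positivity
  have ha0 : (0:ℝ) < |a| := abs_pos.mpr ha
  have hb0 : (0:ℝ) < |b| := abs_pos.mpr hb
  have hab2 : a ^ 2 ≤ b ^ 2 := by
    rw [← sq_abs a, ← sq_abs b]; exact pow_le_pow_left₀ (abs_nonneg a) hab 2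
  have hRa : (k / (2 * a ^ 2)) * a ^ 2 = k / 2 := by field_simp
  have hSb : (k / (2 * b ^ 2)) * b ^ 2 = k / 2 := by field_simp
  have hsq : (k / (2 * a ^ 2)) * (k / (2 * b ^ 2)) = (k / (2 * (|a| * |b|))) ^ 2 := by
    rw [div_pow, mul_pow, mul_pow, sq_abs, sq_abs]
    field_simp
  have hsqrt : Real.sqrt ((k / (2 * a ^ 2)) * (k / (2 * b ^ 2))) = k / (2 * (|a| * |b|)) := by
    rw [hsq, Real.sqrt_sq (by positivity)]
  refine ⟨by gcongr, by positivity, by rw [hRa, hSb]; linarith, ?_⟩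
  have hki : k ^ 2 * k⁻¹ ^ 2 = 1 := by field_simp
  rw [hRa, hSb, hsqrt, abs_mul]
  field_simp
  ring

lemma attain2 (k a b : ℝ) (hk : 0 < k) (ha : a ≠ 0) (hb : b ≠ 0) :
    (k / (a ^ 2 + b ^ 2)) ≤ (k / (a ^ 2 + b ^ 2)) ∧ 0 < k / (a ^ 2 + b ^ 2) ∧
    (k / (a ^ 2 + b ^ 2)) * a ^ 2 + (k / (a ^ 2 + b ^ 2)) * b ^ 2 < 2 * k ∧
    1 / ((2 * k - (k / (a ^ 2 + b ^ 2)) * a ^ 2 - (k / (a ^ 2 + b ^ 2)) * b ^ 2) *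
        Real.sqrt ((k / (a ^ 2 + b ^ 2)) * (k / (a ^ 2 + b ^ 2)))) =
      k⁻¹ ^ 2 * (a ^ 2 + b ^ 2) := by
  have hc : (0:ℝ) < a ^ 2 + b ^ 2 := by positivity
  have hsum : (k / (a ^ 2 + b ^ 2)) * a ^ 2 + (k / (a ^ 2 + b ^ 2)) * b ^ 2 = k := by
    field_simp
  have hsqrt : Real.sqrt ((k / (a ^ 2 + b ^ 2)) * (k / (a ^ 2 + b ^ 2))) =
      k / (a ^ 2 + b ^ 2) := Real.sqrt_mul_self (by positivity)
  refine ⟨le_refl _, by positivity, by rw [show (k / (a ^ 2 + b ^ 2)) * a ^ 2 +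
    (k / (a ^ 2 + b ^ 2)) * b ^ 2 = k from hsum]; linarith, ?_⟩
  rw [show 2 * k - (k / (a ^ 2 + b ^ 2)) * a ^ 2 - (k / (a ^ 2 + b ^ 2)) * b ^ 2
      = 2 * k - ((k / (a ^ 2 + b ^ 2)) * a ^ 2 + (k / (a ^ 2 + b ^ 2)) * b ^ 2) by ring,
    hsum, hsqrt]
  have hki : k ^ 2 * k⁻¹ ^ 2 = 1 := by field_simp
  field_simp
  ring

/-- The minimization of `γ·δ = 1/((2k − Ra² − Sb²)√(RS))` over admissible
`R ≥ S > 0`: the infimum equals `2k⁻²|ab|` if `|b| ≥ |a|` and `k⁻²(a² + b²)` if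
`|b| < |a|`; when `|b| ≥ |a|` it is attained at `R = k/(2a²)`, `S = k/(2b²)`. -/
theorem gain_product_minimization (k a b : ℝ) (hk : 0 < k) (ha : a ≠ 0) (hb : b ≠ 0) :
    IsGLB {v : ℝ | ∃ R S : ℝ, S ≤ R ∧ 0 < S ∧ R * a ^ 2 + S * b ^ 2 < 2 * k ∧
        v = 1 / ((2 * k - R * a ^ 2 - S * b ^ 2) * Real.sqrt (R * S))}
      (if |a| ≤ |b| then 2 * k⁻¹ ^ 2 * |a * b| else k⁻¹ ^ 2 * (a ^ 2 + b ^ 2)) ∧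
    (|a| ≤ |b| →
      (let R := k / (2 * a ^ 2); let S := k / (2 * b ^ 2);
       S ≤ R ∧ 0 < S ∧ R * a ^ 2 + S * b ^ 2 < 2 * k ∧
         1 / ((2 * k - R * a ^ 2 - S * b ^ 2) * Real.sqrt (R * S)) =
           2 * k⁻¹ ^ 2 * |a * b|)) := by
  constructor
  · by_cases hab : |a| ≤ |b|
    · rw [if_pos hab]
      apply IsLeast.isGLB
      constructor
      · obtain ⟨h1, h2, h3, h4⟩ := attain1 k a b hk ha hb hab
        exact ⟨k / (2 * a ^ 2), k / (2 * b ^ 2), h1, h2, h3, h4.symm⟩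
      · rintro v ⟨R, S, hRS, hS, hlt, rfl⟩
        have hR : 0 < R := lt_of_lt_of_le hS hRS
        have hs : 0 < Real.sqrt (R * S) := Real.sqrt_pos.mpr (mul_pos hR hS)
        set s := Real.sqrt (R * S) with hsdef
        have hab0 : 0 < |a * b| := abs_pos.mpr (mul_ne_zero ha hb)
        -- AM–GM: 2|ab| s ≤ R a² + S b²
        have key : Real.sqrt ((R * a ^ 2) * (S * b ^ 2)) = s * |a * b| := by
          rw [show (R * a ^ 2) * (S * b ^ 2) = (R * S) * (a * b) ^ 2 by ring,
            Real.sqrt_mul (by positivity), Real.sqrt_sq_eq_abs]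
        have hnn : (0:ℝ) ≤ R * a ^ 2 + S * b ^ 2 :=
          add_nonneg (mul_nonneg hR.le (sq_nonneg a)) (mul_nonneg hS.le (sq_nonneg b))
        have h5 : s * |a * b| ≤ (R * a ^ 2 + S * b ^ 2) / 2 := by
          rw [← key]
          calc Real.sqrt ((R * a ^ 2) * (S * b ^ 2))
              ≤ Real.sqrt (((R * a ^ 2 + S * b ^ 2) / 2) ^ 2) :=
                Real.sqrt_le_sqrt (by nlinarith [sq_nonneg (R * a ^ 2 - S * b ^ 2)])
            _ = (R * a ^ 2 + S * b ^ 2) / 2 := Real.sqrt_sq (by linarith)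
        have h := aux_lb k (2 * |a * b|) (R * a ^ 2 + S * b ^ 2) s hk (by positivity) hs
          (by nlinarith) (by linarith)
        calc 2 * k⁻¹ ^ 2 * |a * b| = 2 * |a * b| * k⁻¹ ^ 2 := by ring
          _ ≤ 1 / ((2 * k - (R * a ^ 2 + S * b ^ 2)) * s) := h
          _ = 1 / ((2 * k - R * a ^ 2 - S * b ^ 2) * s) := by rw [sub_sub]
    · rw [if_neg hab]
      apply IsLeast.isGLB
      constructor
      · obtain ⟨h1, h2, h3, h4⟩ := attain2 k a b hk ha hb
        exact ⟨k / (a ^ 2 + b ^ 2), k / (a ^ 2 + b ^ 2), h1, h2, h3, h4.symm⟩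
      · rintro v ⟨R, S, hRS, hS, hlt, rfl⟩
        have hR : 0 < R := lt_of_lt_of_le hS hRS
        have hs : 0 < Real.sqrt (R * S) := Real.sqrt_pos.mpr (mul_pos hR hS)
        set s := Real.sqrt (R * S) with hsdef
        have hba : b ^ 2 ≤ a ^ 2 := by
          have : |b| < |a| := lt_of_not_ge hab
          rw [← sq_abs a, ← sq_abs b]
          exact le_of_lt (pow_lt_pow_left₀ this (abs_nonneg b) (by norm_num))
        -- (a²+b²) s ≤ R a² + S b²
        set x := Real.sqrt R with hxdef
        set y := Real.sqrt S with hydef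
        have hx2 : x ^ 2 = R := Real.sq_sqrt hR.le
        have hy2 : y ^ 2 = S := Real.sq_sqrt hS.le
        have hxy : s = x * y := Real.sqrt_mul hR.le S
        have hyx : y ≤ x := Real.sqrt_le_sqrt hRS
        have hy0 : 0 ≤ y := Real.sqrt_nonneg S
        have hprod : 0 ≤ (x - y) * (a ^ 2 * x - b ^ 2 * y) := by
          apply mul_nonneg (by linarith)
          have : b ^ 2 * y ≤ a ^ 2 * x :=
            mul_le_mul hba hyx hy0 (sq_nonneg a)
          linarith
        have hu : (a ^ 2 + b ^ 2) * s ≤ R * a ^ 2 + S * b ^ 2 := by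
          rw [hxy, ← hx2, ← hy2]; nlinarith [hprod]
        have h := aux_lb k (a ^ 2 + b ^ 2) (R * a ^ 2 + S * b ^ 2) s hk (by positivity) hs
          hu (by linarith)
        calc k⁻¹ ^ 2 * (a ^ 2 + b ^ 2) = (a ^ 2 + b ^ 2) * k⁻¹ ^ 2 := by ring
          _ ≤ 1 / ((2 * k - (R * a ^ 2 + S * b ^ 2)) * s) := h
          _ = 1 / ((2 * k - R * a ^ 2 - S * b ^ 2) * s) := by rw [sub_sub]
  · intro hab
    exact attain1 k a b hk ha hb hab
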